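/- Let X ≥ 0 be an integrable real random variable with cumulative distribution function F_X(t) = P(X ≤ t) and (left-continuous) quantile function Q_X(p) = inf{t ∈ ℝ : F_X(t) ≥ p} for p ∈ (0,1). Fix p ∈ (0,1) and set q := Q_X(p). If F_X is continuous at q, then E[X · 1{X ≤ q}] = ∫₀ᵖ Q_X(u) du. -/

import Mathlib

open MeasureTheory Set Filter Topology ProbabilityTheory

/-- **Quantile (Lorenz) identity for lower partial expectations.**
For a nonnegative integrable random variable `X` with CDF `F` and left-continuous
quantile function `Q p = inf {t | F t ≥ p}`, if `F` is continuous at `q = Q p`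
for `p ∈ (0,1)`, then `E[X·1{X ≤ q}] = ∫₀ᵖ Q(u) du`. -/
theorem quantile_lower_partial_expectation
    {Ω : Type*} [MeasurableSpace Ω] (P : Measure Ω) [IsProbabilityMeasure P]
    (X : Ω → ℝ) (hXnn : ∀ ω, 0 ≤ X ω) (hXint : Integrable X P)
    (F : ℝ → ℝ) (hF : F = fun t => (P {ω | X ω ≤ t}).toReal)
    (Q : ℝ → ℝ) (hQ : Q = fun p => sInf {t : ℝ | p ≤ F t})
    (p : ℝ) (hp : p ∈ Set.Ioo (0 : ℝ) 1)
    (hcont : ContinuousAt F (Q p)) :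
    ∫ ω, X ω * Set.indicator {ω | X ω ≤ Q p} (fun _ => (1 : ℝ)) ω ∂P
      = ∫ u in (0 : ℝ)..p, Q u := by
  obtain ⟨hp0, hp1⟩ := hp
  have hXae : AEMeasurable X P := hXint.aemeasurable
  set μ : Measure ℝ := P.map X with hμ
  haveI : IsProbabilityMeasure μ := Measure.isProbabilityMeasure_map hXae
  have hμIic : ∀ t, μ (Set.Iic t) = P {ω | X ω ≤ t} := fun t => by
    rw [hμ, Measure.map_apply_of_aemeasurable hXae measurableSet_Iic]; rfl
  have hFμ : ∀ t, F t = (μ (Set.Iic t)).toReal := fun t => by rw [hF, hμIic]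
  have hFc : F = fun t => cdf μ t := by
    funext t; rw [hFμ t, cdf_eq_real, measureReal_def]
  have hFmono : Monotone F := by rw [hFc]; exact monotone_cdf μ
  have hFnn : ∀ t, 0 ≤ F t := fun t => by rw [hFc]; exact cdf_nonneg μ t
  have hFneg : ∀ t, t < 0 → F t = 0 := by
    intro t ht
    have h : {ω | X ω ≤ t} = (∅ : Set Ω) := by
      ext ω; simp only [Set.mem_setOf_eq, Set.mem_empty_iff_false, iff_false, not_le]
      exact lt_of_lt_of_le ht (hXnn ω)
    rw [hF]; simp [h]
  -- basic facts about the sets {t | u ≤ F t}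
  have hSbdd : ∀ u, 0 < u → ∀ t ∈ {t : ℝ | u ≤ F t}, (0:ℝ) ≤ t := by
    intro u hu t ht
    by_contra h
    push_neg at h
    rw [Set.mem_setOf_eq, hFneg t h] at ht
    linarith
  have hSne : ∀ u, u < 1 → {t : ℝ | u ≤ F t}.Nonempty := by
    intro u hu
    have h1 : Tendsto F atTop (𝓝 1) := by rw [hFc]; exact tendsto_cdf_atTop μ
    exact (h1.eventually_const_le hu).exists
  have hQnn : ∀ u, 0 < u → 0 ≤ Q u := by
    intro u hu
    rw [hQ]
    exact Real.le_sInf (hSbdd u hu) le_rfl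
  have hQuniv : ∀ u : ℝ, u ≤ 0 → Q u = 0 := by
    intro u hu
    have h : {t : ℝ | u ≤ F t} = Set.univ :=
      Set.eq_univ_of_forall fun t => le_trans hu (hFnn t)
    rw [hQ]; simp only [h]
    exact Real.sInf_of_not_bddBelow not_bddBelow_univ
  -- F (Q u) ≥ u for u ∈ (0,1), by right-continuity
  have hFQ : ∀ u, 0 < u → u < 1 → u ≤ F (Q u) := by
    intro u hu0 hu1
    have hne := hSne u hu1
    have hsub : Set.Ioi (Q u) ⊆ {t : ℝ | u ≤ F t} := by
      intro s hs
      rw [hQ] at hs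
      obtain ⟨t, ht, hts⟩ := exists_lt_of_csInf_lt hne hs
      exact le_trans ht (hFmono hts.le)
    have hrc : ContinuousWithinAt F (Set.Ici (Q u)) (Q u) := by
      rw [hFc]; exact (cdf μ).right_continuous _
    have hrc' : Tendsto F (𝓝[>] (Q u)) (𝓝 (F (Q u))) :=
      hrc.tendsto.mono_left (nhdsWithin_mono _ Set.Ioi_subset_Ici_self)
    exact ge_of_tendsto hrc' (eventually_nhdsWithin_of_forall fun s hs => hsub hs)
  -- Galois connection
  have hGal : ∀ u, 0 < u → u < 1 → ∀ t, Q u ≤ t ↔ u ≤ F t := by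
    intro u hu0 hu1 t
    constructor
    · intro h; exact le_trans (hFQ u hu0 hu1) (hFmono h)
    · intro h; rw [hQ]; exact csInf_le ⟨0, fun s hs => hSbdd u hu0 s hs⟩ h
  have hFlt : ∀ t, t < Q p → F t < p := by
    intro t ht
    by_contra h
    push_neg at h
    exact absurd ((hGal p hp0 hp1 t).2 h) (not_le.mpr ht)
  have hFq : F (Q p) = p := by
    refine le_antisymm ?_ (hFQ p hp0 hp1)
    have h : Tendsto F (𝓝[<] (Q p)) (𝓝 (F (Q p))) :=
      hcont.tendsto.mono_left nhdsWithin_le_nhds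
    exact le_of_tendsto h (eventually_nhdsWithin_of_forall fun t ht => (hFlt t ht).le)
  -- monotonicity of Q below p
  have hQmono : ∀ a b : ℝ, a ≤ b → b ≤ p → Q a ≤ Q b := by
    intro a b hab hbp
    rcases le_or_gt b 0 with hb | hb
    · rw [hQuniv a (hab.trans hb), hQuniv b hb]
    · have hbne := hSne b (lt_of_le_of_lt hbp hp1)
      rcases le_or_gt a 0 with ha | ha
      · rw [hQuniv a ha]; exact hQnn b hb
      · rw [hQ]
        exact csInf_le_csInf ⟨0, fun s hs => hSbdd a ha s hs⟩ hbne
          (fun t ht => le_trans hab ht)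
  -- the monotone extension g of Q
  set g : ℝ → ℝ := fun u => Q (min u p) with hg
  have hgmono : Monotone g := fun a b hab =>
    hQmono _ _ (min_le_min hab le_rfl) (min_le_right _ _)
  have hgmeas : Measurable g := hgmono.measurable
  have hgQ : ∀ u, u ≤ p → g u = Q u := fun u hu => by
    rw [hg]; simp only [min_eq_left hu]
  have hgnn : ∀ u : ℝ, 0 ≤ g u := by
    intro u
    rcases le_or_gt (min u p) 0 with h | h
    · rw [hg]; simp only; rw [hQuniv _ h]
    · exact hQnn _ h
  -- the function f for the left side
  set f : ℝ → ℝ := fun x => x * Set.indicator (Set.Iic (Q p)) (fun _ => (1:ℝ)) x with hf'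
  have hfmeas : Measurable f :=
    measurable_id.mul (measurable_const.indicator measurableSet_Iic)
  have hfX : ∀ ω, X ω * Set.indicator {ω | X ω ≤ Q p} (fun _ => (1 : ℝ)) ω = f (X ω) := by
    intro ω
    rw [hf']
    simp only [Set.indicator_apply, Set.mem_setOf_eq, Set.mem_Iic]
  have hindle : ∀ x : ℝ, |Set.indicator (Set.Iic (Q p)) (fun _ => (1:ℝ)) x| ≤ 1 := by
    intro x
    rw [Set.indicator_apply]
    split_ifs <;> simp
  have hfXint : Integrable (fun ω => f (X ω)) P := by
    refine hXint.mono (hfmeas.comp_aemeasurable hXae).aestronglyMeasurable ?_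
    refine Eventually.of_forall fun ω => ?_
    rw [hf']
    simp only [Real.norm_eq_abs, abs_mul]
    calc |X ω| * |Set.indicator (Set.Iic (Q p)) (fun _ => (1:ℝ)) (X ω)|
        ≤ |X ω| * 1 := mul_le_mul_of_nonneg_left (hindle _) (abs_nonneg _)
      _ = |X ω| := mul_one _
  have hLHS1 : ∫ ω, X ω * Set.indicator {ω | X ω ≤ Q p} (fun _ => (1 : ℝ)) ω ∂P
      = ∫ x, f x ∂μ := by
    rw [hμ, integral_map hXae hfmeas.aestronglyMeasurable]
    exact integral_congr_ae (Eventually.of_forall fun ω => hfX ω)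
  have hfint : Integrable f μ := by
    rw [hμ]
    refine (integrable_map_measure hfmeas.aestronglyMeasurable hXae).mpr ?_
    exact hfXint
  have hμnn : ∀ᵐ x ∂μ, (0:ℝ) ≤ x := by
    rw [hμ, ae_map_iff hXae measurableSet_Ici]
    exact Eventually.of_forall hXnn
  have hfnn : 0 ≤ᵐ[μ] f := by
    filter_upwards [hμnn] with x hx
    rw [hf']
    exact mul_nonneg hx (Set.indicator_nonneg (fun _ _ => zero_le_one) x)
  have hLHS2 : ∫ x, f x ∂μ = ∫ t in Set.Ioi (0:ℝ), (μ {a | t < f a}).toReal :=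
    hfint.integral_eq_integral_meas_lt hfnn
  -- right side
  have hRHS1 : ∫ u in (0:ℝ)..p, Q u = ∫ u in Set.Ioc (0:ℝ) p, g u := by
    rw [intervalIntegral.integral_of_le hp0.le]
    exact setIntegral_congr_fun measurableSet_Ioc fun u hu => (hgQ u hu.2).symm
  have hgint : IntegrableOn g (Set.Ioc 0 p) := by
    have h : IntegrableOn g (Set.Icc (0:ℝ) p) :=
      (hgmono.monotoneOn _).integrableOn_isCompact isCompact_Icc
    exact h.mono_set Set.Ioc_subset_Icc_self
  have hRHS2 : ∫ u in Set.Ioc (0:ℝ) p, g u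
      = ∫ t in Set.Ioi (0:ℝ),
          ((volume.restrict (Set.Ioc (0:ℝ) p)) {u | t < g u}).toReal :=
    hgint.integral_eq_integral_meas_lt (Eventually.of_forall hgnn)
  -- pointwise equality of the layer-cake integrands
  have hkey : ∀ t ∈ Set.Ioi (0:ℝ),
      (μ {a | t < f a}).toReal
        = ((volume.restrict (Set.Ioc (0:ℝ) p)) {u | t < g u}).toReal := by
    intro t ht
    rw [Set.mem_Ioi] at ht
    have hset1 : {a : ℝ | t < f a} = Set.Ioc t (Q p) := by
      ext x
      rw [hf']
      simp only [Set.mem_setOf_eq, Set.indicator_apply, Set.mem_Iic, Set.mem_Ioc]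
      split_ifs with hx
      · rw [mul_one]
        exact ⟨fun h => ⟨h, hx⟩, fun h => h.1⟩
      · rw [mul_zero]
        exact ⟨fun h => absurd ht (not_lt.mpr h.le), fun h => absurd h.2 hx⟩
    have hset2 : {u : ℝ | t < g u} ∩ Set.Ioc 0 p = Set.Ioc (F t) p := by
      ext u
      simp only [Set.mem_inter_iff, Set.mem_setOf_eq, Set.mem_Ioc]
      constructor
      · rintro ⟨hgu, hu0, hup⟩
        refine ⟨?_, hup⟩
        rw [hgQ u hup] at hgu
        by_contra h
        push_neg at h
        exact absurd ((hGal u hu0 (lt_of_le_of_lt hup hp1) t).2 h) (not_le.mpr hgu)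
      · rintro ⟨hFu, hup⟩
        have hu0 : 0 < u := lt_of_le_of_lt (hFnn t) hFu
        refine ⟨?_, hu0, hup⟩
        rw [hgQ u hup]
        by_contra h
        push_neg at h
        exact absurd ((hGal u hu0 (lt_of_le_of_lt hup hp1) t).1 h) (not_le.mpr hFu)
    have hmeas' : MeasurableSet {u : ℝ | t < g u} :=
      measurableSet_lt measurable_const hgmeas
    rw [hset1, Measure.restrict_apply hmeas', hset2, Real.volume_Ioc]
    rcases le_or_gt (Q p) t with h | h
    · have h1 : Set.Ioc t (Q p) = ∅ := Set.Ioc_eq_empty (not_lt.mpr h)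
      have h2 : p ≤ F t := hFq ▸ hFmono h
      rw [h1, measure_empty, ENNReal.toReal_zero,
        ENNReal.ofReal_eq_zero.mpr (by linarith), ENNReal.toReal_zero]
    · have hFt : F t < p := hFlt t h
      have hsub : Set.Iic t ⊆ Set.Iic (Q p) := Set.Iic_subset_Iic.mpr h.le
      have hμIoc : μ (Set.Ioc t (Q p)) = μ (Set.Iic (Q p)) - μ (Set.Iic t) := by
        rw [← Set.Iic_sdiff_Iic,
          measure_diff hsub measurableSet_Iic.nullMeasurableSet (measure_ne_top μ _)]
      rw [hμIoc, ENNReal.toReal_sub_of_le (measure_mono hsub) (measure_ne_top μ _),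
        ← hFμ, ← hFμ, hFq, ENNReal.toReal_ofReal (by linarith)]
  rw [hLHS1, hLHS2, hRHS1, hRHS2]
  exact setIntegral_congr_fun measurableSet_Ioi hkey
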